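/- Let X be a ℤ^d-SFT defined by forbidding patterns of shape F_n, and let k > n, ℓ = k − n + 1. Suppose b is a pattern on the boundary region ∂_n F_k that is periodic with period ℓ in each cardinal direction, and suppose there are N ≥ 1 patterns on F_k allowed in X whose restriction to ∂_n F_k equals b. Then the periodic entropy of X satisfies h_per(X) ≥ (1/ℓ^d)·log N; in particular h(X) ≥ (1/ℓ^d)·log N. -/

import Mathlib

/-- The shift action of `ℤ^d` on configurations `(Fin d → ℤ) → A`. -/
def shiftZd {A : Type*} {d : ℕ} (p : Fin d → ℤ) (x : (Fin d → ℤ) → A) : (Fin d → ℤ) → A :=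
  fun q => x (fun i => p i + q i)

/-- The `F_n`-pattern of the configuration `x` at the translate of `F_n` with corner `v`. -/
def patternOf {A : Type*} {d n : ℕ} (x : (Fin d → ℤ) → A) (v : Fin d → ℤ) :
    (Fin d → Fin n) → A :=
  fun t => x (fun i => v i + (t i : ℤ))

/-- The `ℤ^d`-SFT defined by forbidding the `F_n`-patterns in `Forb`. -/
def sftOf {A : Type*} {d n : ℕ} (Forb : Set ((Fin d → Fin n) → A)) :
    Set ((Fin d → ℤ) → A) :=
  {x | ∀ v : Fin d → ℤ, patternOf x v ∉ Forb}

/-- The totally periodic points of `Y`: points of `Y` with finite shift orbit. -/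
def perPts {A : Type*} {d : ℕ} (Y : Set ((Fin d → ℤ) → A)) : Set ((Fin d → ℤ) → A) :=
  {x ∈ Y | ({y | ∃ p : Fin d → ℤ, y = shiftZd p x}).Finite}

/-- `Wpat m Y` is the set of `m`-cube patterns appearing (up to translation)
in points of `Y`. -/
def Wpat {A : Type*} {d : ℕ} (m : ℕ) (Y : Set ((Fin d → ℤ) → A)) :
    Set ((Fin d → Fin m) → A) :=
  {w | ∃ x ∈ Y, ∃ v : Fin d → ℤ, ∀ t : Fin d → Fin m, w t = x (fun i => v i + (t i : ℤ))}

/-- The entropy-type growth rate of `Y ⊆ A^(ℤ^d)`: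
`limsup_m (1/m^d)·log #(patterns of shape F_m in Y)`. Applied to a `ℤ^d`-SFT `X` this is
its topological entropy `h(X)`; applied to the set of totally periodic points of `X` it is
the periodic entropy `h_per(X)`. -/
noncomputable def hTop {A : Type*} (d : ℕ) (Y : Set ((Fin d → ℤ) → A)) : ℝ :=
  Filter.limsup (fun m : ℕ => Real.log ((Wpat m Y).ncard) / (m : ℝ) ^ d) Filter.atTop

/-- The cube `F_k = [1,k]^d` in `ℤ^d`. -/
def Fcube (d k : ℕ) : Set (Fin d → ℤ) := {x | ∀ i, 1 ≤ x i ∧ x i ≤ (k : ℤ)}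

/-- The inner boundary `∂_n F_k` of thickness `n`. -/
def bdryN (d n k : ℕ) : Set (Fin d → ℤ) :=
  {x ∈ Fcube d k | ∃ y ∉ Fcube d k, ∀ i, |x i - y i| ≤ (n : ℤ)}

/-- The `n`-cube subpattern of a pattern `u` on `F_k` at the corner `v` (with
`v i + n ≤ k` for all `i`). -/
def subpatNK {A : Type*} {d n k : ℕ} (u : (Fin d → Fin k) → A)
    (v : Fin d → ℕ) (hv : ∀ i, v i + n ≤ k) : (Fin d → Fin n) → A :=
  fun t => u (fun i => ⟨v i + (t i : ℕ), by have h1 := (t i).isLt; have h2 := hv i; omega⟩)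
namespace Stmt17Aux

lemma mem_bdryN_iff {d n k : ℕ} (hn : 1 ≤ n) (hnk : n ≤ k) {x : Fin d → ℤ} :
    x ∈ bdryN d n k ↔ (∀ i, 1 ≤ x i ∧ x i ≤ (k : ℤ)) ∧
      ∃ j, x j ≤ (n : ℤ) ∨ (k : ℤ) - n + 1 ≤ x j := by
  constructor
  · rintro ⟨hx, y, hy, hxy⟩
    refine ⟨hx, ?_⟩
    by_contra hcon
    push_neg at hcon
    apply hy
    intro i
    have h1 := hcon i
    have h2 := hxy i
    have h3 := abs_le.mp h2
    constructor <;> omega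
  · rintro ⟨hx, j, hj⟩
    refine ⟨hx, fun i => if i = j then (if x j ≤ (n : ℤ) then x j - n else x j + n) else x i,
      ?_, ?_⟩
    · intro hmem
      have := hmem j
      simp only [if_pos rfl] at this
      have h1 := (hx j).1
      have h2 := (hx j).2
      split_ifs at this <;> omega
    · intro i
      by_cases hij : i = j
      · subst hij
        simp only [if_pos rfl]
        split_ifs <;> simp [abs_le] <;> omega
      · simp [hij]

lemma bkey {d n k L : ℕ} {A : Type*} (hn : 1 ≤ n) (hk : n < k) (hLk : L + n = k + 1)
    (b : (Fin d → ℤ) → A)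
    (hper : ∀ t ∈ bdryN d n k, ∀ i : Fin d,
      (fun j => t j + if j = i then ((k - n + 1 : ℕ) : ℤ) else 0) ∈ bdryN d n k →
      b (fun j => t j + if j = i then ((k - n + 1 : ℕ) : ℤ) else 0) = b t) :
    ∀ (μ : ℕ) (t t' : Fin d → ℤ), t ∈ bdryN d n k → t' ∈ bdryN d n k →
      (∀ i, ∃ m : ℤ, t' i - t i = L * m) → (∑ i, (t' i - t i).natAbs) = μ → b t' = b t := by
  have hLcast : ((k - n + 1 : ℕ) : ℤ) = (L : ℤ) := by
    have : k - n + 1 = L := by omega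
    rw [this]
  have hLpos : 2 ≤ L := by omega
  intro μ
  induction μ using Nat.strong_induction_on with
  | _ μ ih =>
    intro t t' ht ht' htrans hsum
    by_cases heq : t' = t
    · rw [heq]
    · have hj : ∃ j, t' j ≠ t j := by
        by_contra hcon
        push_neg at hcon
        exact heq (funext hcon)
      obtain ⟨j, hj⟩ := hj
      obtain ⟨m, hm⟩ := htrans j
      have hmne : m ≠ 0 := by
        intro h0; rw [h0, mul_zero] at hm; omega
      rw [mem_bdryN_iff hn (by omega)] at ht ht'
      rcases lt_or_gt_of_ne hmne with hmneg | hmpos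
      · -- t' j ≤ t j - L : step down
        set s : Fin d → ℤ := fun i => if i = j then t j - L else t i with hs
        have hsL : (L : ℤ) * m ≤ -L := by
          have : m ≤ -1 := by omega
          nlinarith [Int.natCast_pos.mpr (show 0 < L by omega)]
        have hsj : s j = t j - L := by simp [hs]
        have hsmem : s ∈ bdryN d n k := by
          rw [mem_bdryN_iff hn (by omega)]
          constructor
          · intro i
            by_cases hij : i = j
            · have hsi : s i = t j - L := by simp [hs, hij]
              rw [hsi]
              have h1 := (ht'.1 j).1
              have h2 := (ht.1 j).2
              omega
            · simp [hs, hij]; exact ht.1 i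
          · exact ⟨j, by rw [hsj]; left; have := (ht.1 j).2; push_cast; omega⟩
        have hstep : b t = b s := by
          have := hper s hsmem j
          have harg : (fun j' => s j' + if j' = j then ((k - n + 1 : ℕ) : ℤ) else 0) = t := by
            funext i
            by_cases hij : i = j
            · subst hij; simp [hsj, hLcast]
            · simp [hs, hij]
          rw [harg] at this
          exact this (by rw [mem_bdryN_iff hn (by omega)]; exact ht)
        rw [hstep]
        -- recurse
        have htrans' : ∀ i, ∃ m' : ℤ, t' i - s i = L * m' := by
          intro i
          by_cases hij : i = j
          · subst hij; exact ⟨m + 1, by rw [hsj]; push_cast; linarith [hm]⟩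
          · obtain ⟨m', hm'⟩ := htrans i; exact ⟨m', by simp [hs, hij]; omega⟩
        have hsum' : (∑ i, (t' i - s i).natAbs) = μ - L := by
          have hterm : ∀ i, i ≠ j → (t' i - s i).natAbs = (t' i - t i).natAbs := by
            intro i hij; simp [hs, hij]
          have hj' : (t' j - s j).natAbs = (t' j - t j).natAbs - L := by
            rw [hsj]; omega
          rw [← hsum]
          rw [Finset.sum_eq_sum_sdiff_singleton_add (Finset.mem_univ j) (fun i => (t' i - s i).natAbs),
            Finset.sum_eq_sum_sdiff_singleton_add (Finset.mem_univ j) (fun i => (t' i - t i).natAbs)]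
          rw [Finset.sum_congr rfl (fun i hi => hterm i (by simpa using (Finset.mem_sdiff.mp hi).2))]
          have : (t' j - t j).natAbs ≥ L := by omega
          omega
        have hlt : μ - L < μ := by
          have : (t' j - t j).natAbs ≥ L := by omega
          have hμ : L ≤ μ := by
            rw [← hsum]
            calc L ≤ (t' j - t j).natAbs := this
            _ ≤ ∑ i, (t' i - t i).natAbs := Finset.single_le_sum (f := fun i => (t' i - t i).natAbs) (fun i _ => Nat.zero_le _) (Finset.mem_univ j)
          omega
        exact ih (μ - L) hlt s t' hsmem ((mem_bdryN_iff hn (by omega)).mpr ht') htrans' hsum'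
      · -- t' j ≥ t j + L : step up
        set s : Fin d → ℤ := fun i => if i = j then t j + L else t i with hs
        have hsL : (L : ℤ) ≤ (L : ℤ) * m := by
          have : 1 ≤ m := by omega
          nlinarith [Int.natCast_pos.mpr (show 0 < L by omega)]
        have hsj : s j = t j + L := by simp [hs]
        have hsmem : s ∈ bdryN d n k := by
          rw [mem_bdryN_iff hn (by omega)]
          constructor
          · intro i
            by_cases hij : i = j
            · have hsi : s i = t j + L := by simp [hs, hij]
              rw [hsi]
              have h1 := (ht'.1 j).2
              have h2 := (ht.1 j).1
              omega
            · simp [hs, hij]; exact ht.1 i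
          · exact ⟨j, by rw [hsj]; right; have := (ht.1 j).1; push_cast; omega⟩
        have hstep : b s = b t := by
          have := hper t (by rw [mem_bdryN_iff hn (by omega)]; exact ht) j
          have harg : (fun j' => t j' + if j' = j then ((k - n + 1 : ℕ) : ℤ) else 0) = s := by
            funext i
            by_cases hij : i = j
            · subst hij; simp [hsj, hLcast]
            · simp [hs, hij]
          rw [harg] at this
          exact this hsmem
        rw [← hstep]
        have htrans' : ∀ i, ∃ m' : ℤ, t' i - s i = L * m' := by
          intro i
          by_cases hij : i = j
          · subst hij; exact ⟨m - 1, by rw [hsj]; push_cast; linarith [hm]⟩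
          · obtain ⟨m', hm'⟩ := htrans i; exact ⟨m', by simp [hs, hij]; omega⟩
        have hsum' : (∑ i, (t' i - s i).natAbs) = μ - L := by
          have hterm : ∀ i, i ≠ j → (t' i - s i).natAbs = (t' i - t i).natAbs := by
            intro i hij; simp [hs, hij]
          have hj' : (t' j - s j).natAbs = (t' j - t j).natAbs - L := by
            rw [hsj]; omega
          rw [← hsum]
          rw [Finset.sum_eq_sum_sdiff_singleton_add (Finset.mem_univ j) (fun i => (t' i - s i).natAbs),
            Finset.sum_eq_sum_sdiff_singleton_add (Finset.mem_univ j) (fun i => (t' i - t i).natAbs)]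
          rw [Finset.sum_congr rfl (fun i hi => hterm i (by simpa using (Finset.mem_sdiff.mp hi).2))]
          have : (t' j - t j).natAbs ≥ L := by omega
          omega
        have hlt : μ - L < μ := by
          have : (t' j - t j).natAbs ≥ L := by omega
          have hμ : L ≤ μ := by
            rw [← hsum]
            calc L ≤ (t' j - t j).natAbs := this
            _ ≤ ∑ i, (t' i - t i).natAbs := Finset.single_le_sum (f := fun i => (t' i - t i).natAbs) (fun i _ => Nat.zero_le _) (Finset.mem_univ j)
          omega
        exact ih (μ - L) hlt s t' hsmem ((mem_bdryN_iff hn (by omega)).mpr ht') htrans' hsum'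

end Stmt17Aux
namespace Stmt17Aux

/-- The concatenated configuration built from a `ℤ^d`-family of `F_k`-patterns. -/
def conf {A : Type*} {d k : ℕ} (L : ℕ) (hL : 0 < L) (hLk : L ≤ k)
    (W : (Fin d → ℤ) → ((Fin d → Fin k) → A)) (q : Fin d → ℤ) : A :=
  W (fun i => (q i - 1) / L)
    (fun i => ⟨((q i - 1) % (L : ℤ)).toNat, by
      have h1 : 0 ≤ (q i - 1) % (L : ℤ) := Int.emod_nonneg _ (by positivity)
      have h2 : (q i - 1) % (L : ℤ) < L := Int.emod_lt_of_pos _ (by exact_mod_cast hL)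
      omega⟩)

section Main

variable {A : Type*} {d n k L : ℕ} {Forb : Set ((Fin d → Fin n) → A)} {b : (Fin d → ℤ) → A}

/-- The set of admissible patterns on `F_k` extending `b` on the boundary. -/
def patSet (n : ℕ) (Forb : Set ((Fin d → Fin n) → A)) (b : (Fin d → ℤ) → A) (k : ℕ) :
    Set ((Fin d → Fin k) → A) :=
  {w : (Fin d → Fin k) → A |
      (∀ (v : Fin d → ℕ) (hv : ∀ i, v i + n ≤ k), subpatNK w v hv ∉ Forb) ∧
      (∀ t : Fin d → Fin k, (fun i => ((t i : ℤ) + 1)) ∈ bdryN d n k →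
        w t = b (fun i => (t i : ℤ) + 1))}

variable (hn : 1 ≤ n) (hk : n < k) (hLk : L + n = k + 1)
    (hper : ∀ t ∈ bdryN d n k, ∀ i : Fin d,
      (fun j => t j + if j = i then ((k - n + 1 : ℕ) : ℤ) else 0) ∈ bdryN d n k →
      b (fun j => t j + if j = i then ((k - n + 1 : ℕ) : ℤ) else 0) = b t)
    {W : (Fin d → ℤ) → ((Fin d → Fin k) → A)} (hW : ∀ p, W p ∈ patSet n Forb b k)

include hn hk hLk hper hW

lemma conf_apply_cube (hL : 0 < L) (hLk' : L ≤ k) (p : Fin d → ℤ) (t : Fin d → Fin k) :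
    conf L hL hLk' W (fun i => (L : ℤ) * p i + 1 + (t i : ℤ)) = W p t := by
  have hL0 : (L : ℤ) ≠ 0 := by positivity
  have hLpos : (0 : ℤ) < L := by exact_mod_cast hL
  set q : Fin d → ℤ := fun i => (L : ℤ) * p i + 1 + (t i : ℤ) with hq
  set a : Fin d → ℤ := fun i => (t i : ℤ) / L with ha
  set r : Fin d → ℤ := fun i => (t i : ℤ) % L with hr
  have hqcell : ∀ i, (q i - 1) / L = p i + a i := by
    intro i
    have : q i - 1 = (t i : ℤ) + L * p i := by rw [hq]; ring
    rw [this, Int.add_mul_ediv_left _ _ hL0, ha]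
    ring
  have hqmod : ∀ i, (q i - 1) % (L : ℤ) = r i := by
    intro i
    have : q i - 1 = (t i : ℤ) + L * p i := by rw [hq]; ring
    rw [this, Int.add_mul_emod_self_left, hr]
  have hr0 : ∀ i, 0 ≤ r i := fun i => Int.emod_nonneg _ hL0
  have hrL : ∀ i, r i < L := fun i => Int.emod_lt_of_pos _ hLpos
  have hdecomp : ∀ i, (L : ℤ) * a i + r i = (t i : ℤ) := fun i => Int.mul_ediv_add_emod _ _
  by_cases hsmall : ∀ i, ((t i : ℤ)) < L
  · -- no wraparound
    have ha0 : ∀ i, a i = 0 := by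
      intro i
      rw [ha]
      exact Int.ediv_eq_zero_of_lt (by positivity) (hsmall i)
    show W _ _ = W p t
    congr 1
    · funext i; rw [hqcell i, ha0 i, add_zero]
    · funext i
      apply Fin.ext
      show (((q i - 1) % (L : ℤ)).toNat) = (t i : ℕ)
      rw [hqmod i]
      have : r i = (t i : ℤ) := by
        have := hdecomp i
        rw [ha0 i] at this
        omega
      omega
  · push_neg at hsmall
    obtain ⟨j, hj⟩ := hsmall
    have haj : 1 ≤ a j := by
      by_contra hcon
      push_neg at hcon
      have : a j ≤ 0 := by omega
      have h1 : (L : ℤ) * a j ≤ 0 := mul_nonpos_of_nonneg_of_nonpos (by positivity) this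
      have h2 := hdecomp j
      have h3 := hrL j
      omega
    have hLaj : (L : ℤ) ≤ L * a j := le_mul_of_one_le_right (by positivity) haj
    have ha0 : ∀ i, 0 ≤ a i := fun i => Int.ediv_nonneg (by positivity) (by positivity)
    set t' : Fin d → Fin k := (fun i => ⟨((q i - 1) % (L : ℤ)).toNat, by
      have h1 := hr0 i; have h2 := hrL i
      rw [hqmod i]
      omega⟩) with ht'
    have ht'val : ∀ i, (t' i : ℤ) = r i := by
      intro i
      show (((q i - 1) % (L : ℤ)).toNat : ℤ) = r i
      rw [hqmod i]
      exact Int.toNat_of_nonneg (hr0 i)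
    have hbdy1 : (fun i => ((t i : ℤ) + 1)) ∈ bdryN d n k := by
      rw [mem_bdryN_iff hn (by omega)]
      refine ⟨fun i => ⟨by omega, by have := (t i).isLt; omega⟩, j, Or.inr ?_⟩
      omega
    have hbdy2 : (fun i => ((t' i : ℤ) + 1)) ∈ bdryN d n k := by
      rw [mem_bdryN_iff hn (by omega)]
      refine ⟨fun i => ⟨by have := ht'val i; have := hr0 i; omega,
        by have := (t' i).isLt; omega⟩, j, Or.inl ?_⟩
      rw [ht'val j]
      have h1 := hdecomp j
      have h2 : (t j : ℤ) ≤ (k : ℤ) - 1 := by have := (t j).isLt; omega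
      omega
    have hWp := (hW p).2 t hbdy1
    have hWpa := (hW (fun i => p i + a i)).2 t' hbdy2
    have hbb : b (fun i => ((t i : ℤ) + 1)) = b (fun i => ((t' i : ℤ) + 1)) :=
      bkey hn hk hLk b hper _ _ _ hbdy2 hbdy1
        (fun i => ⟨a i, by rw [ht'val i]; have := hdecomp i; ring_nf; omega⟩) rfl
    have hconf : conf L hL hLk' W q = W (fun i => p i + a i) t' := by
      show W _ _ = W _ _
      congr 1
      funext i
      exact hqcell i
    rw [hconf, hWpa, ← hbb, ← hWp]

lemma conf_mem_sft (hL : 0 < L) (hLk' : L ≤ k) : conf L hL hLk' W ∈ sftOf Forb := by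
  have hL0 : (L : ℤ) ≠ 0 := by positivity
  have hLpos : (0 : ℤ) < L := by exact_mod_cast hL
  intro v
  set p : Fin d → ℤ := fun i => (v i - 1) / L with hp
  set u : Fin d → ℕ := fun i => ((v i - 1) % (L : ℤ)).toNat with hu
  have huval : ∀ i, ((u i : ℤ)) = (v i - 1) % (L : ℤ) := by
    intro i
    exact Int.toNat_of_nonneg (Int.emod_nonneg _ hL0)
  have huL : ∀ i, u i < L := by
    intro i
    have h2 : (v i - 1) % (L : ℤ) < L := Int.emod_lt_of_pos _ hLpos
    have := huval i
    omega
  have hun : ∀ i, u i + n ≤ k := by intro i; have := huL i; omega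
  have key : patternOf (conf L hL hLk' W) v = subpatNK (W p) u hun := by
    funext t
    have hlt : ∀ i, u i + (t i : ℕ) < k := by
      intro i
      have := huL i
      have := (t i).isLt
      omega
    have harg : (fun i => v i + (t i : ℤ)) =
        (fun i => (L : ℤ) * p i + 1 + (((⟨u i + (t i : ℕ), hlt i⟩ : Fin k)) : ℤ)) := by
      funext i
      have h1 : (L : ℤ) * p i + (v i - 1) % L = v i - 1 := Int.mul_ediv_add_emod _ _
      have h2 := huval i
      show v i + (t i : ℤ) = (L : ℤ) * p i + 1 + ((u i + (t i : ℕ) : ℕ) : ℤ)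
      push_cast
      omega
    show conf L hL hLk' W (fun i => v i + (t i : ℤ)) = _
    rw [harg, conf_apply_cube hn hk hLk hper hW hL hLk']
    rfl
  rw [key]
  exact (hW p).1 u hun

end Main

end Stmt17Aux
namespace Stmt17Aux

lemma orbit_finite {A : Type*} {d : ℕ} (x : (Fin d → ℤ) → A) (T : ℕ) (hT : 0 < T)
    (hx : ∀ s : Fin d → ℤ, shiftZd (fun i => (T : ℤ) * s i) x = x) :
    {y | ∃ p : Fin d → ℤ, y = shiftZd p x}.Finite := by
  have hT0 : (T : ℤ) ≠ 0 := by positivity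
  have hTpos : (0 : ℤ) < T := by exact_mod_cast hT
  apply Set.Finite.subset
    (Set.finite_range (fun r : Fin d → Fin T => shiftZd (fun i => (r i : ℤ)) x))
  rintro y ⟨p, rfl⟩
  refine ⟨fun i => ⟨(p i % (T : ℤ)).toNat, by
    have h1 := Int.emod_nonneg (p i) hT0
    have h2 := Int.emod_lt_of_pos (p i) hTpos
    omega⟩, ?_⟩
  funext q
  show x (fun i => (((p i % (T : ℤ)).toNat : ℤ)) + q i) = x (fun i => p i + q i)
  have hcoe : ∀ i, (((p i % (T : ℤ)).toNat : ℤ)) = p i % T := fun i =>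
    Int.toNat_of_nonneg (Int.emod_nonneg (p i) hT0)
  have hs := hx (fun i => p i / T)
  have : x (fun i => p i + q i) =
      shiftZd (fun i => (T : ℤ) * ((fun i => p i / T) i)) x (fun i => p i % T + q i) := by
    show _ = x (fun i => (T : ℤ) * (p i / T) + (p i % T + q i))
    congr 1
    funext i
    have := Int.mul_ediv_add_emod (p i) T
    omega
  rw [this, hs]
  congr 1
  funext i
  rw [hcoe i]

section Main2

variable {A : Type*} {d n k L : ℕ} {Forb : Set ((Fin d → Fin n) → A)} {b : (Fin d → ℤ) → A}

/-- A `ℤ^d`-family of patterns that is `m`-periodic in each direction. -/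
def Wper {A : Type*} {d k : ℕ} (m : ℕ) (hm : 0 < m) (c : (Fin d → Fin m) → ((Fin d → Fin k) → A))
    (p : Fin d → ℤ) : (Fin d → Fin k) → A :=
  c (fun i => ⟨(p i % (m : ℤ)).toNat, by
    have h1 := Int.emod_nonneg (p i) (show (m:ℤ) ≠ 0 by positivity)
    have h2 := Int.emod_lt_of_pos (p i) (show (0:ℤ) < m by exact_mod_cast hm)
    omega⟩)

lemma conf_shiftL (hL : 0 < L) (hLk' : L ≤ k) (W : (Fin d → ℤ) → ((Fin d → Fin k) → A))
    (s : Fin d → ℤ) :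
    shiftZd (fun i => (L : ℤ) * s i) (conf L hL hLk' W) =
      conf L hL hLk' (fun r => W (fun i => s i + r i)) := by
  have hL0 : (L : ℤ) ≠ 0 := by positivity
  funext q
  show (conf L hL hLk' W) (fun i => (L : ℤ) * s i + q i) = _
  show W _ _ = W _ _
  congr 1
  · funext i
    show ((L : ℤ) * s i + q i - 1) / L = s i + (q i - 1) / L
    have h : (L : ℤ) * s i + q i - 1 = (q i - 1) + (L : ℤ) * s i := by ring
    rw [h, Int.add_mul_ediv_left _ _ hL0]
    ring
  · funext i
    apply Fin.ext
    show ((((L : ℤ) * s i + q i - 1) % L).toNat) = (((q i - 1) % (L : ℤ)).toNat)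
    have h : (L : ℤ) * s i + q i - 1 = (q i - 1) + (L : ℤ) * s i := by ring
    rw [h, Int.add_mul_emod_self_left]

lemma Wper_shift {m : ℕ} (hm : 0 < m) (c : (Fin d → Fin m) → ((Fin d → Fin k) → A))
    (s r : Fin d → ℤ) :
    Wper m hm c (fun i => (m : ℤ) * s i + r i) = Wper m hm c r := by
  unfold Wper
  apply congrArg
  funext i
  apply Fin.ext
  show ((((m : ℤ) * s i + r i) % m).toNat) = ((r i % (m : ℤ)).toNat)
  have h : (m : ℤ) * s i + r i = r i + (m : ℤ) * s i := by ring
  rw [h, Int.add_mul_emod_self_left]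

variable (hn : 1 ≤ n) (hk : n < k) (hLk : L + n = k + 1)
    (hper : ∀ t ∈ bdryN d n k, ∀ i : Fin d,
      (fun j => t j + if j = i then ((k - n + 1 : ℕ) : ℤ) else 0) ∈ bdryN d n k →
      b (fun j => t j + if j = i then ((k - n + 1 : ℕ) : ℤ) else 0) = b t)
    {N : ℕ} {e : Fin N → ((Fin d → Fin k) → A)} (he : Function.Injective e)
    (heS : ∀ i, e i ∈ patSet n Forb b k)
    {m : ℕ} (hm : 0 < m)

include hn hk hLk hper he heS hm

lemma count_le [Fintype A] (hL : 0 < L) (hLk' : L ≤ k) :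
    N ^ (m ^ d) ≤ (Wpat (L * (m - 1) + k) (perPts (sftOf Forb))).ncard := by
  set M := L * (m - 1) + k with hM
  -- the configuration associated to c
  set xc : ((Fin d → Fin m) → Fin N) → ((Fin d → ℤ) → A) :=
    fun c => conf L hL hLk' (Wper m hm (fun z => e (c z))) with hxc
  have hWm : ∀ (c : (Fin d → Fin m) → Fin N) (p : Fin d → ℤ), Wper m hm (fun z => e (c z)) p ∈ patSet n Forb b k :=
    fun c p => heS _
  have hxper : ∀ c, xc c ∈ perPts (sftOf Forb) := by
    intro c
    refine ⟨conf_mem_sft hn hk hLk hper (hWm c) hL hLk', ?_⟩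
    apply orbit_finite _ (L * m) (by positivity)
    intro s
    have h1 : (fun i => ((L * m : ℕ) : ℤ) * s i) = (fun i => (L : ℤ) * ((m : ℤ) * s i)) := by
      funext i; push_cast; ring
    have hWeq : (fun r => Wper m hm (fun z => e (c z)) (fun i => (m : ℤ) * s i + r i))
        = Wper m hm (fun z => e (c z)) := by
      funext r
      exact Wper_shift hm _ s r
    rw [h1, conf_shiftL, hWeq]
  -- the pattern map
  set Φ : ((Fin d → Fin m) → Fin N) → ((Fin d → Fin M) → A) :=
    fun c => patternOf (xc c) (fun _ => (1 : ℤ)) with hΦ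
  have hΦmem : ∀ c, Φ c ∈ Wpat M (perPts (sftOf Forb)) := by
    intro c
    exact ⟨xc c, hxper c, fun _ => (1 : ℤ), fun t => rfl⟩
  have hcube : ∀ c (z : Fin d → Fin m) (t : Fin d → Fin k),
      xc c (fun i => (L : ℤ) * (z i : ℤ) + 1 + (t i : ℤ)) = e (c z) t := by
    intro c z t
    show conf L hL hLk' (Wper m hm (fun z => e (c z)))
      (fun i => (L : ℤ) * (z i : ℤ) + 1 + (t i : ℤ)) = e (c z) t
    rw [conf_apply_cube hn hk hLk hper (hWm c) hL hLk']
    show e (c _) t = e (c z) t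
    congr 2
    funext i
    apply Fin.ext
    show ((((z i : ℤ)) % m).toNat) = (z i : ℕ)
    have h1 : ((z i : ℤ)) % m = (z i : ℤ) := Int.emod_eq_of_lt (by positivity)
      (by exact_mod_cast (z i).isLt)
    omega
  have hΦinj : Function.Injective Φ := by
    intro c c' hcc
    funext z
    apply he
    funext t
    have hlt : ∀ i : Fin d, L * (z i : ℕ) + (t i : ℕ) < M := by
      intro i
      have h1 := (z i).isLt
      have h2 := (t i).isLt
      have h3 : L * (z i : ℕ) ≤ L * (m - 1) := Nat.mul_le_mul_left L (by omega)
      omega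
    have happ := congrFun hcc (fun i => ⟨L * (z i : ℕ) + (t i : ℕ), hlt i⟩)
    rw [hΦ] at happ
    simp only [patternOf] at happ
    rw [← hcube c z t, ← hcube c' z t]
    convert happ using 2 <;> · funext i; push_cast; ring
  -- cardinality
  have hfin : (Wpat M (perPts (sftOf Forb))).Finite := Set.toFinite _
  have hcard : Nat.card ((Fin d → Fin m) → Fin N) ≤ Nat.card (Wpat M (perPts (sftOf Forb))) := by
    apply Nat.card_le_card_of_injective
      (fun c => (⟨Φ c, hΦmem c⟩ : Wpat M (perPts (sftOf Forb))))
    intro c c' h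
    exact hΦinj (by simpa using congrArg Subtype.val h)
  rw [Nat.card_coe_set_eq] at hcard
  calc N ^ (m ^ d) = Nat.card ((Fin d → Fin m) → Fin N) := by
        simp [Nat.card_eq_fintype_card]
    _ ≤ _ := hcard

end Main2

end Stmt17Aux
namespace Stmt17Aux

lemma Wpat_mono {A : Type*} {d M : ℕ} {Y Y' : Set ((Fin d → ℤ) → A)} (h : Y ⊆ Y') :
    Wpat M Y ⊆ Wpat M Y' := by
  rintro w ⟨x, hx, v, hv⟩
  exact ⟨x, h hx, v, hv⟩

lemma entropy_lb {A : Type*} [Fintype A] [Nonempty A] {d n k L N : ℕ}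
    (hd : 1 ≤ d) (hn : 1 ≤ n) (hN : 1 ≤ N) (hL : 0 < L) (hLk : L + n = k + 1)
    (Y : Set ((Fin d → ℤ) → A))
    (hc : ∀ m : ℕ, 0 < m → N ^ (m ^ d) ≤ (Wpat (L * (m - 1) + k) Y).ncard) :
    Real.log N / (L : ℝ) ^ d ≤ hTop d Y := by
  have hA : 1 ≤ Fintype.card A := Fintype.card_pos
  set F : ℕ → ℝ := fun M => Real.log ((Wpat M Y).ncard) / (M : ℝ) ^ d with hF
  have hFb : ∀ M, F M ≤ Real.log (Fintype.card A) := by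
    intro M
    have hlogA : 0 ≤ Real.log (Fintype.card A) := Real.log_nonneg (by exact_mod_cast hA)
    rcases Nat.eq_zero_or_pos M with hM | hM
    · subst hM
      show Real.log _ / ((0 : ℕ) : ℝ) ^ d ≤ _
      rw [Nat.cast_zero, zero_pow (by omega), div_zero]
      exact hlogA
    · have h1 : (Wpat M Y).ncard ≤ (Fintype.card A) ^ (M ^ d) := by
        calc (Wpat M Y).ncard ≤ (Set.univ : Set ((Fin d → Fin M) → A)).ncard :=
              Set.ncard_le_ncard (Set.subset_univ _) Set.finite_univ
          _ = Fintype.card ((Fin d → Fin M) → A) := by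
              rw [Set.ncard_univ, Nat.card_eq_fintype_card]
          _ = (Fintype.card A) ^ (M ^ d) := by
              simp [Fintype.card_fun]
      have h2 : Real.log ((Wpat M Y).ncard) ≤ ((M : ℝ) ^ d) * Real.log (Fintype.card A) := by
        rcases Nat.eq_zero_or_pos (Wpat M Y).ncard with h0 | h0
        · rw [h0]
          simp only [Nat.cast_zero, Real.log_zero]
          exact mul_nonneg (by positivity) hlogA
        · calc Real.log ((Wpat M Y).ncard)
              ≤ Real.log (((Fintype.card A) ^ (M ^ d) : ℕ)) := by
                apply Real.log_le_log (by exact_mod_cast h0)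
                exact_mod_cast h1
            _ = ((M : ℝ) ^ d) * Real.log (Fintype.card A) := by
              push_cast
              rw [Real.log_pow]
              push_cast
              ring
      have hMpos : (0 : ℝ) < (M : ℝ) ^ d := by positivity
      rw [hF]
      rw [div_le_iff₀ hMpos]
      linarith [h2]
  have hbdd : Filter.IsBoundedUnder (· ≤ ·) Filter.atTop F :=
    Filter.isBoundedUnder_of ⟨Real.log (Fintype.card A), hFb⟩
  have hkLc : k = L + (n - 1) := by omega
  set c : ℕ := n - 1 with hcdef
  set g : ℕ → ℝ := fun m => Real.log N * ((m : ℝ) / ((L : ℝ) * m + c)) ^ d with hg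
  have hL0 : (L : ℝ) ≠ 0 := by positivity
  have htend : Filter.Tendsto g Filter.atTop (nhds (Real.log N * (1 / (L : ℝ)) ^ d)) := by
    have h0 : Filter.Tendsto (fun m : ℕ => (c : ℝ) / (m : ℝ)) Filter.atTop (nhds 0) :=
      Filter.Tendsto.div_atTop tendsto_const_nhds tendsto_natCast_atTop_atTop
    have h1 : Filter.Tendsto (fun m : ℕ => (L : ℝ) + (c : ℝ) / m) Filter.atTop
        (nhds (L : ℝ)) := by
      simpa using tendsto_const_nhds.add h0
    have h2 : Filter.Tendsto (fun m : ℕ => ((L : ℝ) + (c : ℝ) / m)⁻¹) Filter.atTop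
        (nhds ((L : ℝ))⁻¹) := h1.inv₀ hL0
    have h3 : Filter.Tendsto (fun m : ℕ => (m : ℝ) / ((L : ℝ) * m + c)) Filter.atTop
        (nhds (1 / (L : ℝ))) := by
      rw [one_div]
      apply h2.congr'
      filter_upwards [Filter.eventually_ge_atTop 1] with m hm
      have hm0 : (m : ℝ) ≠ 0 := by positivity
      have hden : (L : ℝ) * m + c > 0 := by positivity
      field_simp
    exact (h3.pow d).const_mul (Real.log N)
  have hlogN : 0 ≤ Real.log N := Real.log_nonneg (by exact_mod_cast hN)
  have hgoal : Real.log N / (L : ℝ) ^ d = Real.log N * (1 / (L : ℝ)) ^ d := by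
    rw [one_div, inv_pow, ← div_eq_mul_inv]
  rw [hgoal]
  show Real.log N * (1 / (L : ℝ)) ^ d ≤ Filter.limsup F Filter.atTop
  by_contra hcon
  push_neg at hcon
  set a := Real.log N * (1 / (L : ℝ)) ^ d with ha
  set x := Filter.limsup F Filter.atTop with hx
  have hε : 0 < (a - x) / 2 := by linarith
  have key : a - (a - x) / 2 ≤ x := by
    apply Filter.le_limsup_of_frequently_le _ hbdd
    rw [Filter.frequently_atTop]
    intro M₀
    have hev : ∀ᶠ m in Filter.atTop, a - (a - x) / 2 < g m :=
      htend.eventually (lt_mem_nhds (by linarith))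
    obtain ⟨m₀, hm₀⟩ := Filter.eventually_atTop.mp hev
    set m := max (max m₀ M₀) 1 with hmdef
    have hm1 : 1 ≤ m := le_max_right _ _
    obtain ⟨m', hm'⟩ : ∃ m', m = m' + 1 := ⟨m - 1, by omega⟩
    set M := L * (m - 1) + k with hMdef
    have hM' : M = L * m' + k := by rw [hMdef, hm']; simp
    have hMm : m ≤ M := by
      have : m' ≤ L * m' := Nat.le_mul_of_pos_left m' hL
      omega
    refine ⟨M, by omega, ?_⟩
    have hle := hc m (by omega)
    have hMcast : ((M : ℕ) : ℝ) = (L : ℝ) * m + c := by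
      rw [hM', hm']
      have hk' : (k : ℝ) = (L : ℝ) + c := by exact_mod_cast hkLc
      push_cast
      rw [hk']
      ring
    have hMpos : (0 : ℝ) < (M : ℝ) ^ d := by
      have : 0 < M := by omega
      positivity
    have hFge : g m ≤ F M := by
      have hcount' : ((N : ℝ)) ^ (m ^ d) ≤ ((Wpat M Y).ncard : ℝ) := by
        rw [hMdef]
        exact_mod_cast hle
      have hlog : ((m : ℝ) ^ d) * Real.log N ≤ Real.log ((Wpat M Y).ncard) := by
        have hl := Real.log_le_log (by positivity) hcount'
        rw [Real.log_pow] at hl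
        calc ((m : ℝ) ^ d) * Real.log N = ((m ^ d : ℕ) : ℝ) * Real.log N := by push_cast; ring
          _ ≤ _ := hl
      have hgm : g m = ((m : ℝ) ^ d * Real.log N) / (M : ℝ) ^ d := by
        show Real.log (N : ℝ) * ((m : ℝ) / ((L : ℝ) * m + c)) ^ d = _
        rw [hMcast, div_pow]
        ring
      rw [hgm]
      exact div_le_div_of_nonneg_right hlog (le_of_lt hMpos) |>.trans_eq rfl
    exact le_of_lt (lt_of_lt_of_le (hm₀ m (le_trans (le_max_left _ _) (le_max_left _ _))) hFge)
  linarith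

end Stmt17Aux
/-- If `b` is a pattern on `∂_n F_k` that is `ℓ`-periodic (`ℓ = k − n + 1`) in each
cardinal direction and there are `N ≥ 1` locally allowed patterns on `F_k` extending `b`,
then `h_per(X) ≥ (1/ℓ^d)·log N`, and in particular `h(X) ≥ (1/ℓ^d)·log N`. -/
theorem stmt17 {A : Type*} [Fintype A] {d n k : ℕ} (hd : 1 ≤ d) (hn : 1 ≤ n) (hk : n < k)
    (Forb : Set ((Fin d → Fin n) → A)) (b : (Fin d → ℤ) → A) (N : ℕ) (hN : 1 ≤ N)
    (hper : ∀ t ∈ bdryN d n k, ∀ i : Fin d,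
      (fun j => t j + if j = i then ((k - n + 1 : ℕ) : ℤ) else 0) ∈ bdryN d n k →
      b (fun j => t j + if j = i then ((k - n + 1 : ℕ) : ℤ) else 0) = b t)
    (hcount : N ≤ Set.ncard {w : (Fin d → Fin k) → A |
      (∀ (v : Fin d → ℕ) (hv : ∀ i, v i + n ≤ k), subpatNK w v hv ∉ Forb) ∧
      (∀ t : Fin d → Fin k, (fun i => ((t i : ℤ) + 1)) ∈ bdryN d n k →
        w t = b (fun i => (t i : ℤ) + 1))}) :
    Real.log N / ((k - n + 1 : ℕ) : ℝ) ^ d ≤ hTop d (perPts (sftOf Forb)) ∧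
    Real.log N / ((k - n + 1 : ℕ) : ℝ) ^ d ≤ hTop d (sftOf Forb) := by
  have hLk : (k - n + 1) + n = k + 1 := by clear hcount hper; omega
  have hL : 0 < k - n + 1 := by clear hcount hper; omega
  have hLk' : k - n + 1 ≤ k := by clear hcount hper; omega
  have hcount' : N ≤ (Stmt17Aux.patSet n Forb b k).ncard := hcount
  have hSne : (Stmt17Aux.patSet n Forb b k).Nonempty :=
    Set.nonempty_of_ncard_ne_zero (by clear hper hcount; omega)
  obtain ⟨w₀, hw₀⟩ := hSne
  haveI hAne : Nonempty A := ⟨w₀ (fun _ => ⟨0, by clear hcount hper; omega⟩)⟩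
  have hfin : (Stmt17Aux.patSet n Forb b k).Finite := Set.toFinite _
  have hcard' : N ≤ hfin.toFinset.card := by rwa [← Set.ncard_eq_toFinset_card _ hfin]
  obtain ⟨T, hTs, hTc⟩ := Finset.exists_subset_card_eq hcard'
  set e : Fin N → ((Fin d → Fin k) → A) :=
    fun i => (T.equivFin.symm (Fin.cast hTc.symm i)).val with he_def
  have he : Function.Injective e := by
    intro i j hij
    have h1 : T.equivFin.symm (Fin.cast hTc.symm i) = T.equivFin.symm (Fin.cast hTc.symm j) :=
      Subtype.ext hij
    have h2 := T.equivFin.symm.injective h1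
    exact Fin.cast_injective _ h2
  have heS : ∀ i, e i ∈ Stmt17Aux.patSet n Forb b k := by
    intro i
    exact hfin.mem_toFinset.mp (hTs (T.equivFin.symm (Fin.cast hTc.symm i)).2)
  have hcY : ∀ m : ℕ, 0 < m →
      N ^ (m ^ d) ≤ (Wpat ((k - n + 1) * (m - 1) + k) (perPts (sftOf Forb))).ncard :=
    fun m hm => Stmt17Aux.count_le hn hk hLk hper he heS hm hL hLk'
  have hcX : ∀ m : ℕ, 0 < m →
      N ^ (m ^ d) ≤ (Wpat ((k - n + 1) * (m - 1) + k) (sftOf Forb)).ncard :=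
    fun m hm => (hcY m hm).trans
      (Set.ncard_le_ncard (Stmt17Aux.Wpat_mono (fun x hx => hx.1)) (Set.toFinite _))
  exact ⟨Stmt17Aux.entropy_lb hd hn hN hL hLk _ hcY, Stmt17Aux.entropy_lb hd hn hN hL hLk _ hcX⟩
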